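/- In a monoidal dagger category where the tensor unit I is dagger simple and morphisms factor as epi followed by dagger mono, every nonzero scalar z : I → I is both monic and epic. -/
import Mathlib


open CategoryTheory MonoidalCategory

/-- A dagger structure on a category: a contravariant identity-on-objects
involutive endofunctor. -/
class DaggerCategory (C : Type*) [Category C] where
  dag : ∀ {X Y : C}, (X ⟶ Y) → (Y ⟶ X)
  dag_id : ∀ X : C, dag (𝟙 X) = 𝟙 X
  dag_dag : ∀ {X Y : C} (f : X ⟶ Y), dag (dag f) = f
  dag_comp : ∀ {X Y Z : C} (f : X ⟶ Y) (g : Y ⟶ Z), dag (f ≫ g) = dag g ≫ dag f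

open DaggerCategory

/-- The dagger of a zero morphism is zero. -/
lemma dag_zero' {C : Type*} [Category C] [Limits.HasZeroMorphisms C]
    [DaggerCategory C] (X Y : C) : dag (0 : X ⟶ Y) = 0 := by
  have h : (0 : X ⟶ Y) = dag (0 : Y ⟶ X) ≫ (0 : Y ⟶ Y) := (Limits.comp_zero).symm
  calc dag (0 : X ⟶ Y) = dag (dag (0 : Y ⟶ X) ≫ (0 : Y ⟶ Y)) := by rw [← h]
    _ = dag (0 : Y ⟶ Y) ≫ dag (dag (0 : Y ⟶ X)) := dag_comp _ _
    _ = dag (0 : Y ⟶ Y) ≫ (0 : Y ⟶ X) := by rw [dag_dag]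
    _ = 0 := Limits.comp_zero

theorem nonzero_scalars_monic_epic
    {C : Type*} [Category C] [MonoidalCategory C]
    [Limits.HasZeroMorphisms C] [DaggerCategory C]
    -- the tensor unit is dagger simple
    (dagger_simple : ∀ {S : C} (m : S ⟶ 𝟙_ C), m ≫ dag m = 𝟙 S → IsIso m ∨ m = 0)
    -- every morphism factors as an epimorphism followed by a dagger monomorphism
    (factor : ∀ {H K : C} (t : H ⟶ K), ∃ (E : C) (e : H ⟶ E) (k : E ⟶ K),
      Epi e ∧ k ≫ dag k = 𝟙 E ∧ t = e ≫ k) :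
    ∀ z : 𝟙_ C ⟶ 𝟙_ C, z ≠ 0 → Mono z ∧ Epi z := by
  -- first: any nonzero scalar is epic
  have epi_of_ne : ∀ w : 𝟙_ C ⟶ 𝟙_ C, w ≠ 0 → Epi w := by
    intro w hw
    obtain ⟨E, e, k, he, hk, hfac⟩ := factor w
    rcases dagger_simple k hk with hiso | hzero
    · rw [hfac]
      exact epi_comp e k
    · exact absurd (by rw [hfac, hzero, Limits.comp_zero]) hw
  intro z hz
  refine ⟨?_, epi_of_ne z hz⟩
  -- dag z is nonzero, hence epic
  have hdz : dag z ≠ 0 := by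
    intro h
    apply hz
    have := congrArg dag h
    rwa [dag_dag, dag_zero'] at this
  have hepi : Epi (dag z) := epi_of_ne _ hdz
  constructor
  intro X f g hfg
  have h1 : dag z ≫ dag f = dag z ≫ dag g := by
    rw [← dag_comp, ← dag_comp, hfg]
  have h2 : dag f = dag g := hepi.left_cancellation _ _ h1
  have := congrArg dag h2
  rwa [dag_dag, dag_dag] at this
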